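/- In the setting of a (P2+P3, complement-of-(P2+P3))-free graph G with induced 5-cycle C on v1,...,v5, for every i in {1,...,5} the edges between V_{i,i+2} and V_{i+1,i+3} form a co-matching: every vertex of V_{i,i+2} has at most one non-neighbour in V_{i+1,i+3}, and every vertex of V_{i+1,i+3} has at most one non-neighbour in V_{i,i+2}. -/

import Mathlib

/-- `G` contains no induced subgraph isomorphic to `H`. -/
def InducedFree {α V : Type*} (G : SimpleGraph V) (H : SimpleGraph α) : Prop :=
  ∀ f : α ↪ V, ¬ (∀ a b : α, H.Adj a b ↔ G.Adj (f a) (f b))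

/-- `P₂ + P₃`: the disjoint union of a 2-vertex path and a 3-vertex path. -/
def P2PlusP3 : SimpleGraph (Fin 5) :=
  SimpleGraph.fromRel fun a b => (a = 0 ∧ b = 1) ∨ (a = 2 ∧ b = 3) ∨ (a = 3 ∧ b = 4)

/-- `VS G v S`: the vertices outside the 5-cycle `v 0, …, v 4` whose
neighbourhood on the cycle is exactly `{v i : i ∈ S}`. -/
def VS {V : Type*} (G : SimpleGraph V) (v : ZMod 5 → V) (S : Set (ZMod 5)) : Set V :=
  {x | (∀ i, x ≠ v i) ∧ ∀ i, G.Adj x (v i) ↔ i ∈ S}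

lemma find_p2p3 {V : Type*} {G : SimpleGraph V} (hG : InducedFree G P2PlusP3)
    (a b c d e : V) (hce : c ≠ e)
    (h01 : G.Adj a b) (h23 : G.Adj c d) (h34 : G.Adj d e)
    (h02 : ¬ G.Adj a c) (h03 : ¬ G.Adj a d) (h04 : ¬ G.Adj a e)
    (h12 : ¬ G.Adj b c) (h13 : ¬ G.Adj b d) (h14 : ¬ G.Adj b e)
    (h24 : ¬ G.Adj c e) : False := by
  have hab : a ≠ b := h01.ne
  have hcd : c ≠ d := h23.ne
  have hde : d ≠ e := h34.ne
  have hac : a ≠ c := fun h => h12 (h ▸ h01.symm)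
  have had : a ≠ d := fun h => h13 (h ▸ h01.symm)
  have hae : a ≠ e := fun h => h14 (h ▸ h01.symm)
  have hbc : b ≠ c := fun h => h02 (h ▸ h01)
  have hbd : b ≠ d := fun h => h03 (h ▸ h01)
  have hbe : b ≠ e := fun h => h04 (h ▸ h01)
  have h20 : ¬ G.Adj c a := fun h => h02 h.symm
  have h30 : ¬ G.Adj d a := fun h => h03 h.symm
  have h40 : ¬ G.Adj e a := fun h => h04 h.symm
  have h21 : ¬ G.Adj c b := fun h => h12 h.symm
  have h31 : ¬ G.Adj d b := fun h => h13 h.symm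
  have h41 : ¬ G.Adj e b := fun h => h14 h.symm
  have h42 : ¬ G.Adj e c := fun h => h24 h.symm
  have h10 : G.Adj b a := h01.symm
  have h32 : G.Adj d c := h23.symm
  have h43 : G.Adj e d := h34.symm
  refine hG ⟨![a,b,c,d,e], ?inj⟩ ?adj
  case adj =>
    intro p q
    fin_cases p <;> fin_cases q <;>
      simp only [P2PlusP3, SimpleGraph.fromRel_adj, Matrix.cons_val_zero, Matrix.cons_val_one,
        Matrix.head_cons, Matrix.cons_val_two, Matrix.tail_cons, Matrix.cons_val_three,
        Matrix.cons_val_four, Matrix.cons_val_fin_one] <;>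
      first
        | (refine iff_of_true ?_ ?_ <;> first | decide | assumption)
        | (refine iff_of_false ?_ ?_ <;> first | decide | assumption | exact G.irrefl)
  case inj =>
    intro p q
    fin_cases p <;> fin_cases q <;>
      simp only [Matrix.cons_val_zero, Matrix.cons_val_one, Matrix.head_cons,
        Matrix.cons_val_two, Matrix.tail_cons, Matrix.cons_val_three,
        Matrix.cons_val_four, Matrix.cons_val_fin_one] <;> intro h <;>
      first | rfl | trivial | exact absurd h (by assumption) | exact absurd h.symm (by assumption)

/-- For each `i`, the edges between `V_{i,i+2}` and `V_{i+1,i+3}` form a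
co-matching: each vertex of one set has at most one non-neighbour in the other. -/
theorem stmt_17 {V : Type*} [Fintype V] (G : SimpleGraph V)
    (hG : InducedFree G P2PlusP3) (hGc : InducedFree Gᶜ P2PlusP3)
    (v : ZMod 5 → V) (hv : Function.Injective v)
    (hC : ∀ i j : ZMod 5, G.Adj (v i) (v j) ↔ j = i + 1 ∨ j = i - 1) :
    ∀ i : ZMod 5,
      (∀ x ∈ VS G v {i, i + 2}, ∀ y ∈ VS G v {i + 1, i + 3},
        ∀ y' ∈ VS G v {i + 1, i + 3}, ¬ G.Adj x y → ¬ G.Adj x y' → y = y') ∧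
      (∀ y ∈ VS G v {i + 1, i + 3}, ∀ x ∈ VS G v {i, i + 2},
        ∀ x' ∈ VS G v {i, i + 2}, ¬ G.Adj y x → ¬ G.Adj y x' → x = x') := by
  intro i
  have F1 : ∀ i : ZMod 5, ¬(i = i+1 ∨ i = i+3) := by decide
  have F2 : ∀ i : ZMod 5, ¬(i+2 = i+1 ∨ i+2 = i+3) := by decide
  have F3 : ∀ i : ZMod 5, ¬(i+3 = i ∨ i+3 = i+2) := by decide
  have F4 : ∀ i : ZMod 5, ¬(i+1 = i ∨ i+1 = i+2) := by decide
  have C1 : ∀ i : ZMod 5, ¬(i+2 = i+1 ∨ i+2 = i-1) := by decide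
  have C2 : ∀ i : ZMod 5, ¬(i+3 = i+1 ∨ i+3 = i-1) := by decide
  have C3 : ∀ i : ZMod 5, ¬(i+3 = (i+1)+1 ∨ i+3 = (i+1)-1) := by decide
  have C4 : ∀ i : ZMod 5, ¬(i = (i+3)+1 ∨ i = (i+3)-1) := by decide
  have D1 : ∀ i : ZMod 5, i ≠ i+2 := by decide
  have D2 : ∀ i : ZMod 5, i+1 ≠ i+3 := by decide
  have ncyc : ∀ j k, ¬(k = j+1 ∨ k = j-1) → ¬ G.Adj (v j) (v k) :=
    fun j k hjk h => hjk ((hC j k).mp h)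
  constructor
  · rintro x ⟨hxv, hxadj⟩ y ⟨hyv, hyadj⟩ y' ⟨hy'v, hy'adj⟩ hxy hxy'
    by_contra hne
    have nx : ∀ j, ¬(j = i ∨ j = i+2) → ¬ G.Adj x (v j) :=
      fun j hj h => hj (by simpa using (hxadj j).mp h)
    have ny : ∀ j, ¬(j = i+1 ∨ j = i+3) → ¬ G.Adj y (v j) :=
      fun j hj h => hj (by simpa using (hyadj j).mp h)
    have ny' : ∀ j, ¬(j = i+1 ∨ j = i+3) → ¬ G.Adj y' (v j) :=
      fun j hj h => hj (by simpa using (hy'adj j).mp h)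
    have px1 : G.Adj x (v i) := (hxadj i).mpr (Set.mem_insert _ _)
    have px2 : G.Adj x (v (i+2)) := (hxadj (i+2)).mpr (Set.mem_insert_iff.mpr (Or.inr rfl))
    have py1 : G.Adj y (v (i+1)) := (hyadj (i+1)).mpr (Set.mem_insert _ _)
    have py2 : G.Adj y (v (i+3)) := (hyadj (i+3)).mpr (Set.mem_insert_iff.mpr (Or.inr rfl))
    have py'2 : G.Adj y' (v (i+3)) := (hy'adj (i+3)).mpr (Set.mem_insert_iff.mpr (Or.inr rfl))
    by_cases hyy' : G.Adj y y'
    · exact find_p2p3 hG y y' (v i) x (v (i+2)) (fun h => D1 i (hv h))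
        hyy' px1.symm px2
        (ny i (F1 i)) (fun h => hxy h.symm) (ny (i+2) (F2 i))
        (ny' i (F1 i)) (fun h => hxy' h.symm) (ny' (i+2) (F2 i))
        (ncyc i (i+2) (C1 i))
    · exact find_p2p3 hG x (v i) y (v (i+3)) y' hne
        px1 py2 py'2.symm
        hxy (nx (i+3) (F3 i)) hxy'
        (fun h => ny i (F1 i) h.symm) (ncyc i (i+3) (C2 i))
        (fun h => ny' i (F1 i) h.symm)
        hyy'
  · rintro y ⟨hyv, hyadj⟩ x ⟨hxv, hxadj⟩ x' ⟨hx'v, hx'adj⟩ hyx hyx'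
    by_contra hne
    have ny : ∀ j, ¬(j = i+1 ∨ j = i+3) → ¬ G.Adj y (v j) :=
      fun j hj h => hj (by simpa using (hyadj j).mp h)
    have nx : ∀ j, ¬(j = i ∨ j = i+2) → ¬ G.Adj x (v j) :=
      fun j hj h => hj (by simpa using (hxadj j).mp h)
    have nx' : ∀ j, ¬(j = i ∨ j = i+2) → ¬ G.Adj x' (v j) :=
      fun j hj h => hj (by simpa using (hx'adj j).mp h)
    have py1 : G.Adj y (v (i+1)) := (hyadj (i+1)).mpr (Set.mem_insert _ _)
    have py2 : G.Adj y (v (i+3)) := (hyadj (i+3)).mpr (Set.mem_insert_iff.mpr (Or.inr rfl))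
    have px1 : G.Adj x (v i) := (hxadj i).mpr (Set.mem_insert _ _)
    have px'1 : G.Adj x' (v i) := (hx'adj i).mpr (Set.mem_insert _ _)
    by_cases hxx' : G.Adj x x'
    · exact find_p2p3 hG x x' (v (i+1)) y (v (i+3)) (fun h => D2 i (hv h))
        hxx' py1.symm py2
        (nx (i+1) (F4 i)) (fun h => hyx h.symm) (nx (i+3) (F3 i))
        (nx' (i+1) (F4 i)) (fun h => hyx' h.symm) (nx' (i+3) (F3 i))
        (ncyc (i+1) (i+3) (C3 i))
    · exact find_p2p3 hG y (v (i+3)) x (v i) x' hne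
        py2 px1 px'1.symm
        hyx (ny i (F1 i)) hyx'
        (fun h => nx (i+3) (F3 i) h.symm) (ncyc (i+3) i (C4 i))
        (fun h => nx' (i+3) (F3 i) h.symm)
        hxx'
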